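/- If θ is a nonempty shifted skew diagram that is a row or a column, then for every integer p ≥ 1 one has B(θ,p) = 1 if p = |θ| and B(θ,p) = 0 otherwise. -/

import Mathlib

/-- `hcoef a b = Σ_{j=0}^{min(a,b)} (-1)^j 2^{a-j} binom(a,j)`; it is `0` when `b < 0`. -/
def hcoef (a : ℕ) (b : ℤ) : ℤ :=
  ∑ j ∈ Finset.range (a + 1),
    if (j : ℤ) ≤ b then (-1) ^ j * 2 ^ (a - j) * (a.choose j) else 0

attribute [local instance] Classical.propDecidable

/-- The south-east corners of a finite set of boxes: boxes `(i,j)` such that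
neither `(i+1,j)` nor `(i,j+1)` belongs to the set. -/
def seCorners (θ : Finset (ℤ × ℤ)) : Finset (ℤ × ℤ) :=
  θ.filter fun b => (b.1 + 1, b.2) ∉ θ ∧ (b.1, b.2 + 1) ∉ θ

/-- The south-east rim of `θ`: boxes `(i,j) ∈ θ` such that no box `(i',j') ∈ θ`
has `i' > i` and `j' > j`. -/
def seRim (θ : Finset (ℤ × ℤ)) : Finset (ℤ × ℤ) :=
  θ.filter fun b => ∀ b' ∈ θ, ¬ (b.1 < b'.1 ∧ b.2 < b'.2)

/-- `d(θ)`: the number of boxes in the south-east rim of `θ`. -/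
def dRim (θ : Finset (ℤ × ℤ)) : ℕ := (seRim θ).card

/-- `θ` is a rim if it equals its own south-east rim. -/
def IsRim (θ : Finset (ℤ × ℤ)) : Prop := θ = seRim θ

/-- Two boxes are adjacent (connected) if they share a side. -/
def Adjacent (b b' : ℤ × ℤ) : Prop := |b.1 - b'.1| + |b.2 - b'.2| = 1

/-- `b'` can be reached from `b` by a chain of adjacent boxes of `θ`. -/
def Reach (θ : Finset (ℤ × ℤ)) (b b' : ℤ × ℤ) : Prop :=
  Relation.ReflTransGen (fun x y => y ∈ θ ∧ Adjacent x y) b b'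

/-- The connected components of `θ`. -/
noncomputable def comps (θ : Finset (ℤ × ℤ)) : Finset (Finset (ℤ × ℤ)) :=
  θ.image fun b => θ.filter fun b' => Reach θ b b'

/-- `N(θ)`: the number of connected components of `θ`. -/
noncomputable def Ncomp (θ : Finset (ℤ × ℤ)) : ℕ := (comps θ).card

/-- `N⁻(θ) = max(N(θ) - 1, 0)`. -/
noncomputable def Nminus (θ : Finset (ℤ × ℤ)) : ℕ := Ncomp θ - 1

/-- `N'(θ)`: the number of connected components of `θ` containing no diagonal box. -/
noncomputable def Nprime (θ : Finset (ℤ × ℤ)) : ℕ :=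
  ((comps θ).filter fun c => ∀ b ∈ c, b.1 ≠ b.2).card

/-- `B(θ,p) = Σ_S (-1)^{|S|} h(N⁻(θ∖S), d(θ∖S) - p)`, the sum over subsets `S`
of the set of south-east corners of `θ`. -/
noncomputable def Bcoef (θ : Finset (ℤ × ℤ)) (p : ℤ) : ℤ :=
  ∑ S ∈ (seCorners θ).powerset,
    (-1) ^ S.card * hcoef (Nminus (θ \ S)) ((dRim (θ \ S) : ℤ) - p)

/-- `C(θ,p) = Σ_S (-1)^{|S|} h(N'(θ∖S), d(θ∖S) - p)`, the sum over subsets `S`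
of the set of south-east corners of `θ`. -/
noncomputable def Ccoef (θ : Finset (ℤ × ℤ)) (p : ℤ) : ℤ :=
  ∑ S ∈ (seCorners θ).powerset,
    (-1) ^ S.card * hcoef (Nprime (θ \ S)) ((dRim (θ \ S) : ℤ) - p)

/-- A strict partition with largest part at most `n`, encoded as a function
with `lam i = 0` for `i` beyond the length. -/
def IsStrictPartition (n : ℕ) (lam : ℤ → ℤ) : Prop :=
  lam 1 ≤ (n : ℤ) ∧ (∀ i : ℤ, 1 ≤ i → 0 ≤ lam i) ∧
  (∀ i : ℤ, 1 ≤ i → lam (i + 1) = 0 ∨ lam (i + 1) < lam i)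

/-- The shifted Young diagram `{(i,j) : 1 ≤ i ≤ ℓ, i ≤ j ≤ λ_i + i - 1}` of a
strict partition. -/
noncomputable def shiftedD (n : ℕ) (lam : ℤ → ℤ) : Finset (ℤ × ℤ) :=
  (Finset.Icc (1 : ℤ) (n : ℤ) ×ˢ Finset.Icc (1 : ℤ) (2 * (n : ℤ))).filter
    fun b => b.1 ≤ b.2 ∧ b.2 ≤ lam b.1 + b.1 - 1

/-- `θ` is a shifted skew diagram: `θ = ν/λ` for strict partitions `λ ⊆ ν`
with `ν_1 ≤ n`. -/
def IsShiftedSkewDiagram (n : ℕ) (θ : Finset (ℤ × ℤ)) : Prop :=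
  ∃ lam nu : ℤ → ℤ, IsStrictPartition n lam ∧ IsStrictPartition n nu ∧
    (∀ i : ℤ, 1 ≤ i → lam i ≤ nu i) ∧ θ = shiftedD n nu \ shiftedD n lam

section Aux

lemma hcoef_zero (b : ℤ) : hcoef 0 b = if 0 ≤ b then 1 else 0 := by
  simp [hcoef]

lemma mem_shiftedD {n : ℕ} {f : ℤ → ℤ} {i j : ℤ} :
    (i, j) ∈ shiftedD n f ↔
      (1 ≤ i ∧ i ≤ n) ∧ (1 ≤ j ∧ j ≤ 2 * n) ∧ i ≤ j ∧ j ≤ f i + i - 1 := by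
  simp [shiftedD, Finset.mem_filter, Finset.mem_product, Finset.mem_Icc, and_assoc]

lemma sp_ge {n : ℕ} {f : ℤ → ℤ} (hf : IsStrictPartition n f) :
    ∀ (m : ℕ) (i : ℤ), 1 ≤ i → 1 ≤ f (i + m) → f (i + m) + m ≤ f i := by
  intro m
  induction m with
  | zero => intro i _ _; simp
  | succ m ih =>
    intro i hi h1
    have e : (i + ((m : ℕ) + 1 : ℕ) : ℤ) = (i + 1) + (m : ℕ) := by push_cast; ring
    rw [e] at h1 ⊢
    have h2 := hf.2.2 i hi
    have h3 := ih (i + 1) (by omega) h1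
    push_cast
    rcases h2 with h0 | hlt <;> omega

lemma skew_not_lam {n : ℕ} {lam nu : ℤ → ℤ} {i j : ℤ}
    (hmem : (i, j) ∈ shiftedD n nu) (hnot : (i, j) ∉ shiftedD n lam) :
    lam i + i - 1 < j := by
  rw [mem_shiftedD] at hmem hnot
  by_contra h
  exact hnot ⟨hmem.1, hmem.2.1, hmem.2.2.1, by omega⟩

lemma row_interval {n : ℕ} {θ : Finset (ℤ × ℤ)} (hθ : IsShiftedSkewDiagram n θ)
    {i j1 j2 j : ℤ} (h1 : (i, j1) ∈ θ) (h2 : (i, j2) ∈ θ) (hj1 : j1 ≤ j) (hj2 : j ≤ j2) :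
    (i, j) ∈ θ := by
  obtain ⟨lam, nu, hlam, hnu, hle, rfl⟩ := hθ
  rw [Finset.mem_sdiff] at h1 h2 ⊢
  have hl1 := skew_not_lam h1.1 h1.2
  rw [mem_shiftedD] at h1 h2 ⊢
  obtain ⟨⟨ha1, ha2⟩, ⟨hb1, hb2⟩, hc, hd⟩ := h1.1
  obtain ⟨⟨he1, he2⟩, ⟨hf1, hf2⟩, hg, hh⟩ := h2.1
  refine ⟨⟨⟨ha1, ha2⟩, ⟨by omega, by omega⟩, by omega, by omega⟩, fun h => ?_⟩
  rw [mem_shiftedD] at h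
  omega

lemma col_interval {n : ℕ} {θ : Finset (ℤ × ℤ)} (hθ : IsShiftedSkewDiagram n θ)
    {j i1 i2 i : ℤ} (h1 : (i1, j) ∈ θ) (h2 : (i2, j) ∈ θ) (hi1 : i1 ≤ i) (hi2 : i ≤ i2) :
    (i, j) ∈ θ := by
  obtain ⟨lam, nu, hlam, hnu, hle, rfl⟩ := hθ
  rw [Finset.mem_sdiff] at h1 h2 ⊢
  have hl1 := skew_not_lam h1.1 h1.2
  rw [mem_shiftedD] at h1 h2 ⊢
  obtain ⟨⟨ha1, ha2⟩, ⟨hb1, hb2⟩, hc, hd⟩ := h1.1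
  obtain ⟨⟨he1, he2⟩, ⟨hf1, hf2⟩, hg, hh⟩ := h2.1
  have hnu2 : 1 ≤ nu i2 := by omega
  have hcast : i + (((i2 - i).toNat : ℕ) : ℤ) = i2 := by omega
  have hnui : nu i2 + (((i2 - i).toNat : ℕ) : ℤ) ≤ nu i := by
    have := sp_ge hnu (i2 - i).toNat i (by omega) (by rw [hcast]; exact hnu2)
    rwa [hcast] at this
  have hlami : lam i + i ≤ j := by
    by_cases hpos : 1 ≤ lam i
    · have hcast2 : i1 + (((i - i1).toNat : ℕ) : ℤ) = i := by omega
      have := sp_ge hlam (i - i1).toNat i1 ha1 (by rw [hcast2]; exact hpos)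
      rw [hcast2] at this
      omega
    · have := hlam.2.1 i (by omega)
      omega
  refine ⟨⟨⟨by omega, by omega⟩, ⟨by omega, by omega⟩, by omega, by omega⟩, fun h => ?_⟩
  rw [mem_shiftedD] at h
  omega

def lineF (c v : ℤ × ℤ) (k : ℤ) : ℤ × ℤ := (c.1 + k * v.1, c.2 + k * v.2)

noncomputable def lineT (c v : ℤ × ℤ) (a b : ℤ) : Finset (ℤ × ℤ) := (Finset.Icc a b).image (lineF c v)

lemma lineF_inj {c v : ℤ × ℤ} (hv : v = ((0 : ℤ), (1 : ℤ)) ∨ v = ((1 : ℤ), (0 : ℤ))) :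
    Function.Injective (lineF c v) := by
  rcases hv with rfl | rfl <;> intro k k' h <;>
    simp only [lineF, Prod.ext_iff] at h <;> omega

lemma mem_lineT {c v : ℤ × ℤ} {a b k : ℤ} (hk : k ∈ Finset.Icc a b) :
    lineF c v k ∈ lineT c v a b := Finset.mem_image_of_mem _ hk

lemma abs_one_of {x y : ℤ} (h : x - y = 1 ∨ y - x = 1) : |x - y| = 1 := by
  rcases h with h | h
  · rw [h]; norm_num
  · rw [show x - y = -1 by omega]; norm_num

lemma adj_lineF {c v : ℤ × ℤ} (hv : v = ((0 : ℤ), (1 : ℤ)) ∨ v = ((1 : ℤ), (0 : ℤ))) (k : ℤ) :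
    Adjacent (lineF c v k) (lineF c v (k + 1)) ∧ Adjacent (lineF c v (k + 1)) (lineF c v k) := by
  rcases hv with rfl | rfl <;> constructor <;>
    simp only [Adjacent, lineF, mul_zero, mul_one, add_zero, sub_self, abs_zero, zero_add] <;>
    exact abs_one_of (by omega)

lemma reach_line {c v : ℤ × ℤ} (hv : v = ((0 : ℤ), (1 : ℤ)) ∨ v = ((1 : ℤ), (0 : ℤ)))
    {a b : ℤ} :
    ∀ (m : ℕ) (x : ℤ), a ≤ x → x + m ≤ b →
      Reach (lineT c v a b) (lineF c v x) (lineF c v (x + m)) ∧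
        Reach (lineT c v a b) (lineF c v (x + m)) (lineF c v x) := by
  intro m
  induction m with
  | zero =>
    intro x _ _
    rw [show (x + ((0 : ℕ) : ℤ)) = x by simp]
    exact ⟨Relation.ReflTransGen.refl, Relation.ReflTransGen.refl⟩
  | succ m ih =>
    intro x hx hxb
    push_cast at hxb
    obtain ⟨r1, r2⟩ := ih x hx (by omega)
    have hmem : lineF c v (x + m + 1) ∈ lineT c v a b :=
      mem_lineT (Finset.mem_Icc.2 ⟨by omega, by omega⟩)
    have hmem' : lineF c v (x + m) ∈ lineT c v a b :=
      mem_lineT (Finset.mem_Icc.2 ⟨by omega, by omega⟩)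
    have hadj := adj_lineF (c := c) hv (x + m)
    rw [show (x + ((m : ℕ) + 1 : ℕ) : ℤ) = (x + m) + 1 by push_cast; ring]
    exact ⟨r1.tail ⟨hmem, hadj.1⟩, Relation.ReflTransGen.head ⟨hmem', hadj.2⟩ r2⟩

lemma reach_all {c v : ℤ × ℤ} (hv : v = ((0 : ℤ), (1 : ℤ)) ∨ v = ((1 : ℤ), (0 : ℤ)))
    {a b x y : ℤ} (hx : a ≤ x) (hxb : x ≤ b) (hy : a ≤ y) (hyb : y ≤ b) :
    Reach (lineT c v a b) (lineF c v x) (lineF c v y) := by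
  rcases le_total x y with h | h
  · have h2 : x + (((y - x).toNat : ℕ) : ℤ) ≤ b := by omega
    have := (reach_line (c := c) hv (y - x).toNat x hx h2).1
    rwa [show x + (((y - x).toNat : ℕ) : ℤ) = y by omega] at this
  · have h2 : y + (((x - y).toNat : ℕ) : ℤ) ≤ b := by omega
    have := (reach_line (c := c) hv (x - y).toNat y hy h2).2
    rwa [show y + (((x - y).toNat : ℕ) : ℤ) = x by omega] at this

lemma ncomp_line {c v : ℤ × ℤ} (hv : v = ((0 : ℤ), (1 : ℤ)) ∨ v = ((1 : ℤ), (0 : ℤ)))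
    {a b : ℤ} (hab : a ≤ b) : Ncomp (lineT c v a b) = 1 := by
  unfold Ncomp comps
  have hconst : ∀ x ∈ lineT c v a b,
      ((lineT c v a b).filter fun b' => Reach (lineT c v a b) x b') = lineT c v a b := by
    intro x hx
    rw [Finset.filter_eq_self]
    intro y hy
    obtain ⟨kx, hkx, rfl⟩ := Finset.mem_image.1 hx
    obtain ⟨ky, hky, rfl⟩ := Finset.mem_image.1 hy
    rw [Finset.mem_Icc] at hkx hky
    exact reach_all hv hkx.1 hkx.2 hky.1 hky.2
  rw [Finset.image_congr (g := fun _ => lineT c v a b) fun x hx => hconst x hx,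
    Finset.image_const ⟨lineF c v a, mem_lineT (Finset.mem_Icc.2 ⟨le_refl a, hab⟩)⟩,
    Finset.card_singleton]

lemma nminus_line {c v : ℤ × ℤ} (hv : v = ((0 : ℤ), (1 : ℤ)) ∨ v = ((1 : ℤ), (0 : ℤ)))
    (a b : ℤ) : Nminus (lineT c v a b) = 0 := by
  rcases le_or_gt a b with hab | hab
  · unfold Nminus; rw [ncomp_line hv hab]
  · have he : lineT c v a b = ∅ := by simp [lineT, Finset.Icc_eq_empty_of_lt hab]
    rw [he]; simp [Nminus, Ncomp, comps]

lemma seRim_self {T : Finset (ℤ × ℤ)}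
    (h : (∃ i, ∀ x ∈ T, x.1 = i) ∨ (∃ j, ∀ x ∈ T, x.2 = j)) : seRim T = T := by
  unfold seRim; rw [Finset.filter_eq_self]
  rintro x hx y hy ⟨ha, hb⟩
  rcases h with ⟨i, hi⟩ | ⟨j, hj⟩
  · have h1 := hi x hx; have h2 := hi y hy; omega
  · have h1 := hj x hx; have h2 := hj y hy; omega

lemma line_rc {c v : ℤ × ℤ} (hv : v = ((0 : ℤ), (1 : ℤ)) ∨ v = ((1 : ℤ), (0 : ℤ))) (a b : ℤ) :
    (∃ i, ∀ x ∈ lineT c v a b, x.1 = i) ∨ (∃ j, ∀ x ∈ lineT c v a b, x.2 = j) := by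
  rcases hv with rfl | rfl
  · exact Or.inl ⟨c.1, by rintro x hx; obtain ⟨k, _, rfl⟩ := Finset.mem_image.1 hx; simp [lineF]⟩
  · exact Or.inr ⟨c.2, by rintro x hx; obtain ⟨k, _, rfl⟩ := Finset.mem_image.1 hx; simp [lineF]⟩

lemma seCorners_line {c v : ℤ × ℤ} (hv : v = ((0 : ℤ), (1 : ℤ)) ∨ v = ((1 : ℤ), (0 : ℤ)))
    {a b : ℤ} (hab : a ≤ b) : seCorners (lineT c v a b) = {lineF c v b} := by
  ext x
  simp only [seCorners, Finset.mem_filter, Finset.mem_singleton]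
  constructor
  · rintro ⟨hx, hr1, hr2⟩
    obtain ⟨k, hk, rfl⟩ := Finset.mem_image.1 hx
    rw [Finset.mem_Icc] at hk
    rcases hv with rfl | rfl
    · by_contra hne
      have hkb : k < b := by
        rcases lt_or_eq_of_le hk.2 with h | h
        · exact h
        · exact absurd (by rw [h]) hne
      exact hr2 (by
        rw [show ((lineF c (0,1) k).1, (lineF c (0,1) k).2 + 1) = lineF c (0,1) (k + 1) from by
          simp [lineF]; ring]
        exact mem_lineT (Finset.mem_Icc.2 ⟨by omega, by omega⟩))
    · by_contra hne
      have hkb : k < b := by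
        rcases lt_or_eq_of_le hk.2 with h | h
        · exact h
        · exact absurd (by rw [h]) hne
      exact hr1 (by
        rw [show ((lineF c (1,0) k).1 + 1, (lineF c (1,0) k).2) = lineF c (1,0) (k + 1) from by
          simp [lineF]; ring]
        exact mem_lineT (Finset.mem_Icc.2 ⟨by omega, by omega⟩))
  · rintro rfl
    refine ⟨mem_lineT (Finset.mem_Icc.2 ⟨hab, le_refl b⟩), ?_, ?_⟩ <;>
      · intro hmem
        obtain ⟨k, hk, he⟩ := Finset.mem_image.1 hmem
        rw [Finset.mem_Icc] at hk
        rcases hv with rfl | rfl <;> simp [lineF, Prod.ext_iff] at he <;> omega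

lemma lineT_sdiff {c v : ℤ × ℤ} (hv : v = ((0 : ℤ), (1 : ℤ)) ∨ v = ((1 : ℤ), (0 : ℤ)))
    {a b : ℤ} : lineT c v a b \ {lineF c v b} = lineT c v a (b - 1) := by
  have h1 : ({lineF c v b} : Finset (ℤ × ℤ)) = ({b} : Finset ℤ).image (lineF c v) := by simp
  rw [lineT, lineT, h1, ← Finset.image_sdiff _ _ (lineF_inj hv),
    show Finset.Icc a b \ {b} = Finset.Icc a (b - 1) from by
      ext k; simp only [Finset.mem_sdiff, Finset.mem_Icc, Finset.mem_singleton]; omega]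

lemma lineT_card {c v : ℤ × ℤ} (hv : v = ((0 : ℤ), (1 : ℤ)) ∨ v = ((1 : ℤ), (0 : ℤ)))
    (a b : ℤ) : (lineT c v a b).card = (b + 1 - a).toNat := by
  rw [lineT, Finset.card_image_of_injective _ (lineF_inj hv), Int.card_Icc]

lemma bcoef_line {c v : ℤ × ℤ} (hv : v = ((0 : ℤ), (1 : ℤ)) ∨ v = ((1 : ℤ), (0 : ℤ)))
    {a b : ℤ} (hab : a ≤ b) (p : ℤ) :
    Bcoef (lineT c v a b) p = if p = b - a + 1 then 1 else 0 := by
  have hps : (({lineF c v b} : Finset (ℤ × ℤ))).powerset = {∅, {lineF c v b}} := by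
    ext S; simp [Finset.subset_singleton_iff]
  have hd1 : dRim (lineT c v a b) = (lineT c v a b).card := by
    unfold dRim; rw [seRim_self (line_rc hv a b)]
  have hd2 : dRim (lineT c v a (b - 1)) = (lineT c v a (b - 1)).card := by
    unfold dRim; rw [seRim_self (line_rc hv a (b - 1))]
  unfold Bcoef
  rw [seCorners_line hv hab, hps,
    Finset.sum_pair (Finset.singleton_ne_empty (lineF c v b)).symm,
    Finset.card_empty, Finset.sdiff_empty, Finset.card_singleton, lineT_sdiff hv,
    nminus_line hv, nminus_line hv, hd1, hd2, lineT_card hv, lineT_card hv,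
    hcoef_zero, hcoef_zero]
  simp only [pow_zero, pow_one, one_mul, neg_one_mul]
  split_ifs <;> omega

lemma exists_line {n : ℕ} {θ : Finset (ℤ × ℤ)} (hθ : IsShiftedSkewDiagram n θ)
    (hne : θ.Nonempty)
    (hrowcol : (∃ i : ℤ, ∀ b ∈ θ, b.1 = i) ∨ (∃ j : ℤ, ∀ b ∈ θ, b.2 = j)) :
    ∃ c v a b, (v = ((0 : ℤ), (1 : ℤ)) ∨ v = ((1 : ℤ), (0 : ℤ))) ∧ a ≤ b ∧
      θ = lineT c v a b := by
  obtain ⟨x0, hx0⟩ := hne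
  rcases hrowcol with ⟨i, hi⟩ | ⟨j, hj⟩
  · have hJne : (θ.image Prod.snd).Nonempty := ⟨x0.2, Finset.mem_image_of_mem _ hx0⟩
    have hx2 : x0.2 ∈ θ.image Prod.snd := Finset.mem_image_of_mem _ hx0
    have hab : (θ.image Prod.snd).min' hJne ≤ (θ.image Prod.snd).max' hJne :=
      le_trans (Finset.min'_le _ _ hx2) (Finset.le_max' _ _ hx2)
    have hmin : (i, (θ.image Prod.snd).min' hJne) ∈ θ := by
      obtain ⟨xa, hxa, hxa2⟩ := Finset.mem_image.1 ((θ.image Prod.snd).min'_mem hJne)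
      rw [← hi _ hxa, ← hxa2]; exact hxa
    have hmax : (i, (θ.image Prod.snd).max' hJne) ∈ θ := by
      obtain ⟨xa, hxa, hxa2⟩ := Finset.mem_image.1 ((θ.image Prod.snd).max'_mem hJne)
      rw [← hi _ hxa, ← hxa2]; exact hxa
    refine ⟨(i, 0), (0, 1), (θ.image Prod.snd).min' hJne, (θ.image Prod.snd).max' hJne,
      Or.inl rfl, hab, ?_⟩
    ext x
    simp only [lineT, lineF, Finset.mem_image, Finset.mem_Icc, mul_zero, add_zero, mul_one,
      zero_add]
    constructor
    · intro hx
      refine ⟨x.2, ⟨Finset.min'_le _ _ (Finset.mem_image_of_mem _ hx),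
        Finset.le_max' _ _ (Finset.mem_image_of_mem _ hx)⟩, ?_⟩
      rw [← hi x hx]
    · rintro ⟨k, hk, rfl⟩
      exact row_interval hθ hmin hmax hk.1 hk.2
  · have hJne : (θ.image Prod.fst).Nonempty := ⟨x0.1, Finset.mem_image_of_mem _ hx0⟩
    have hx2 : x0.1 ∈ θ.image Prod.fst := Finset.mem_image_of_mem _ hx0
    have hab : (θ.image Prod.fst).min' hJne ≤ (θ.image Prod.fst).max' hJne :=
      le_trans (Finset.min'_le _ _ hx2) (Finset.le_max' _ _ hx2)
    have hmin : ((θ.image Prod.fst).min' hJne, j) ∈ θ := by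
      obtain ⟨xa, hxa, hxa2⟩ := Finset.mem_image.1 ((θ.image Prod.fst).min'_mem hJne)
      rw [← hj _ hxa, ← hxa2]; exact hxa
    have hmax : ((θ.image Prod.fst).max' hJne, j) ∈ θ := by
      obtain ⟨xa, hxa, hxa2⟩ := Finset.mem_image.1 ((θ.image Prod.fst).max'_mem hJne)
      rw [← hj _ hxa, ← hxa2]; exact hxa
    refine ⟨(0, j), (1, 0), (θ.image Prod.fst).min' hJne, (θ.image Prod.fst).max' hJne,
      Or.inr rfl, hab, ?_⟩
    ext x
    simp only [lineT, lineF, Finset.mem_image, Finset.mem_Icc, mul_zero, add_zero, mul_one,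
      zero_add]
    constructor
    · intro hx
      refine ⟨x.1, ⟨Finset.min'_le _ _ (Finset.mem_image_of_mem _ hx),
        Finset.le_max' _ _ (Finset.mem_image_of_mem _ hx)⟩, ?_⟩
      rw [← hj x hx]
    · rintro ⟨k, hk, rfl⟩
      exact col_interval hθ hmin hmax hk.1 hk.2

end Aux
/-- If the nonempty shifted skew diagram `θ` is a row or a column, then for
every integer `p ≥ 1`, `B(θ,p) = 1` if `p = |θ|` and `B(θ,p) = 0` otherwise. -/
theorem Bcoef_of_row_or_col (n : ℕ) (hn : 0 < n) (θ : Finset (ℤ × ℤ))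
    (hθ : IsShiftedSkewDiagram n θ) (hne : θ.Nonempty)
    (hrowcol : (∃ i : ℤ, ∀ b ∈ θ, b.1 = i) ∨ (∃ j : ℤ, ∀ b ∈ θ, b.2 = j))
    (p : ℤ) (hp : 1 ≤ p) :
    Bcoef θ p = if p = (θ.card : ℤ) then 1 else 0 := by
  obtain ⟨c, v, a, b, hv, hab, rfl⟩ := exists_line hθ hne hrowcol
  rw [bcoef_line hv hab, lineT_card hv,
    show ((((b + 1 - a).toNat : ℕ)) : ℤ) = b - a + 1 from by omega]
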